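/- For every integer s ≥ 0, the number of integer 4-tuples (t₀⁰, t₋₁, t₀, t₁) ∈ ℤ⁴ satisfying: 2t₋₁ ≥ t₀ ≥ 2t₁ ≥ 0; t₀⁰ ≥ 0; t₁ + t₋₁ = 5s; t₀⁰ + t₀ = 7s; 5s ≥ t₁, 5s ≥ t₀ − t₋₁, 5s ≥ t₋₁ − t₀⁰; 6s ≥ t₀⁰; 3s ≥ t₋₁ + 2t₁ − t₀, 3s ≥ t₁; 4s ≥ t₀⁰ + 2(t₀ − t₋₁ − t₁), 4s ≥ t₀ − 2t₁, is equal to 6s² + (7/2)s + (3 + (−1)^s)/4. -/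

import Mathlib

open Set Finset

namespace BZAux

def Lo (s x : ℕ) : ℤ := max (2*(s:ℤ) + x) (2*(x:ℤ))
def Up (s x : ℕ) : ℤ := min (4*(s:ℤ) + 2*x) (10*(s:ℤ) - 2*x)

lemma sum_affine (a d : ℤ) (n : ℕ) :
    2 * ∑ i ∈ Finset.range n, (a + d * (i:ℤ)) = 2*(n:ℤ)*a + d*((n:ℤ)*((n:ℤ)-1)) := by
  induction n with
  | zero => simp
  | succ m ih =>
      rw [Finset.sum_range_succ]
      push_cast
      push_cast at ih
      linear_combination ih

lemma piece (s A B : ℕ) (a d : ℤ) (n : ℕ) (hn : B - A = n)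
    (h : ∀ i : ℕ, i < n → (((Up s (A+i) + 1 - Lo s (A+i)).toNat : ℕ) : ℤ) = a + d * i) :
    ∑ x ∈ Finset.Ico A B, ((Finset.Icc (Lo s x) (Up s x)).card : ℤ)
      = ∑ i ∈ Finset.range n, (a + d * (i:ℤ)) := by
  rw [Finset.sum_Ico_eq_sum_range, hn]
  refine Finset.sum_congr rfl fun i hi => ?_
  rw [Int.card_Icc]
  exact h i (Finset.mem_range.mp hi)

lemma card_sum (s : ℕ) :
    2 * (∑ x ∈ Finset.range (3*s+1), ((Finset.Icc (Lo s x) (Up s x)).card : ℤ))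
      = 12*(s:ℤ)^2 + 7*(s:ℤ) + 2 - ((s % 2 : ℕ) : ℤ) := by
  rcases Nat.even_or_odd s with hs | hs
  · obtain ⟨k, rfl⟩ : ∃ k, s = 2*k := ⟨s/2, by have := Nat.even_iff.mp hs; omega⟩
    have hm : (2*k) % 2 = 0 := by omega
    rw [hm, Finset.range_eq_Ico,
      ← Finset.sum_Ico_consecutive _ (show 0 ≤ 3*k+1 by omega) (show 3*k+1 ≤ 3*(2*k)+1 by omega),
      ← Finset.sum_Ico_consecutive _ (show 3*k+1 ≤ 4*k+1 by omega) (show 4*k+1 ≤ 3*(2*k)+1 by omega),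
      ← Finset.sum_Ico_consecutive _ (show 4*k+1 ≤ 5*k+1 by omega) (show 5*k+1 ≤ 3*(2*k)+1 by omega),
      piece (2*k) 0 (3*k+1) (4*(k:ℤ)+1) 1 (3*k+1) (by omega)
        (fun i hi => by simp only [Lo, Up]; push_cast; omega),
      piece (2*k) (3*k+1) (4*k+1) (7*(k:ℤ)-2) (-3) k (by omega)
        (fun i hi => by simp only [Lo, Up]; push_cast; omega),
      piece (2*k) (4*k+1) (5*k+1) (4*(k:ℤ)-3) (-4) k (by omega)
        (fun i hi => by simp only [Lo, Up]; push_cast; omega),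
      piece (2*k) (5*k+1) (3*(2*k)+1) 0 0 k (by omega)
        (fun i hi => by simp only [Lo, Up]; push_cast; omega)]
    have e1 := sum_affine (4*(k:ℤ)+1) 1 (3*k+1)
    have e2 := sum_affine (7*(k:ℤ)-2) (-3) k
    have e3 := sum_affine (4*(k:ℤ)-3) (-4) k
    have e4 := sum_affine (0:ℤ) 0 k
    push_cast at e1 e2 e3 e4 ⊢
    linear_combination e1 + e2 + e3 + e4
  · obtain ⟨k, rfl⟩ : ∃ k, s = 2*k+1 := ⟨s/2, by have := Nat.odd_iff.mp hs; omega⟩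
    have hm : (2*k+1) % 2 = 1 := by omega
    rw [hm, Finset.range_eq_Ico,
      ← Finset.sum_Ico_consecutive _ (show 0 ≤ 3*k+2 by omega) (show 3*k+2 ≤ 3*(2*k+1)+1 by omega),
      ← Finset.sum_Ico_consecutive _ (show 3*k+2 ≤ 4*k+3 by omega) (show 4*k+3 ≤ 3*(2*k+1)+1 by omega),
      ← Finset.sum_Ico_consecutive _ (show 4*k+3 ≤ 5*k+3 by omega) (show 5*k+3 ≤ 3*(2*k+1)+1 by omega),
      piece (2*k+1) 0 (3*k+2) (4*(k:ℤ)+3) 1 (3*k+2) (by omega)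
        (fun i hi => by simp only [Lo, Up]; push_cast; omega),
      piece (2*k+1) (3*k+2) (4*k+3) (7*(k:ℤ)+3) (-3) (k+1) (by omega)
        (fun i hi => by simp only [Lo, Up]; push_cast; omega),
      piece (2*k+1) (4*k+3) (5*k+3) (4*(k:ℤ)-1) (-4) k (by omega)
        (fun i hi => by simp only [Lo, Up]; push_cast; omega),
      piece (2*k+1) (5*k+3) (3*(2*k+1)+1) 0 0 (k+1) (by omega)
        (fun i hi => by simp only [Lo, Up]; push_cast; omega)]
    have e1 := sum_affine (4*(k:ℤ)+3) 1 (3*k+2)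
    have e2 := sum_affine (7*(k:ℤ)+3) (-3) (k+1)
    have e3 := sum_affine (4*(k:ℤ)-1) (-4) k
    have e4 := sum_affine (0:ℤ) 0 (k+1)
    push_cast at e1 e2 e3 e4 ⊢
    linear_combination e1 + e2 + e3 + e4

noncomputable def T (s : ℕ) : Finset (ℤ × ℤ × ℤ × ℤ) :=
  (Finset.range (3*s+1)).biUnion fun x =>
    (Finset.Icc (Lo s x) (Up s x)).image fun y =>
      (7*(s:ℤ) - y, 5*(s:ℤ) - (x:ℤ), y, (x:ℤ))

lemma card_T (s : ℕ) :
    (T s).card = ∑ x ∈ Finset.range (3*s+1), (Finset.Icc (Lo s x) (Up s x)).card := by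
  rw [T, Finset.card_biUnion]
  · exact Finset.sum_congr rfl fun x _ =>
      Finset.card_image_of_injective _ (fun y1 y2 h => by
        simpa using congrArg (fun p => p.2.2.1) h)
  · intro x _ y _ hxy
    rw [Function.onFun, Finset.disjoint_left]
    rintro t ht1 ht2
    simp only [Finset.mem_image, Finset.mem_Icc] at ht1 ht2
    obtain ⟨y1, _, rfl⟩ := ht1
    obtain ⟨y2, _, h2⟩ := ht2
    have h3 : (y:ℤ) = (x:ℤ) := congrArg (fun p => p.2.2.2) h2
    omega

end BZAux

open BZAux in
theorem bz_count_563456 (s : ℕ) :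
    (Set.ncard {t : ℤ × ℤ × ℤ × ℤ |
        2 * t.2.1 ≥ t.2.2.1 ∧ t.2.2.1 ≥ 2 * t.2.2.2 ∧ t.2.2.2 ≥ 0 ∧
        t.1 ≥ 0 ∧
        t.2.2.2 + t.2.1 = 5 * (s : ℤ) ∧
        t.1 + t.2.2.1 = 7 * (s : ℤ) ∧
        5 * (s : ℤ) ≥ t.2.2.2 ∧ 5 * (s : ℤ) ≥ t.2.2.1 - t.2.1 ∧
        5 * (s : ℤ) ≥ t.2.1 - t.1 ∧
        6 * (s : ℤ) ≥ t.1 ∧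
        3 * (s : ℤ) ≥ t.2.1 + 2 * t.2.2.2 - t.2.2.1 ∧ 3 * (s : ℤ) ≥ t.2.2.2 ∧
        4 * (s : ℤ) ≥ t.1 + 2 * (t.2.2.1 - t.2.1 - t.2.2.2) ∧
        4 * (s : ℤ) ≥ t.2.2.1 - 2 * t.2.2.2} : ℝ)
      = 6 * (s : ℝ) ^ 2 + (7 / 2) * (s : ℝ) + (3 + (-1 : ℝ) ^ s) / 4 := by
  have hset : {t : ℤ × ℤ × ℤ × ℤ |
        2 * t.2.1 ≥ t.2.2.1 ∧ t.2.2.1 ≥ 2 * t.2.2.2 ∧ t.2.2.2 ≥ 0 ∧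
        t.1 ≥ 0 ∧
        t.2.2.2 + t.2.1 = 5 * (s : ℤ) ∧
        t.1 + t.2.2.1 = 7 * (s : ℤ) ∧
        5 * (s : ℤ) ≥ t.2.2.2 ∧ 5 * (s : ℤ) ≥ t.2.2.1 - t.2.1 ∧
        5 * (s : ℤ) ≥ t.2.1 - t.1 ∧
        6 * (s : ℤ) ≥ t.1 ∧
        3 * (s : ℤ) ≥ t.2.1 + 2 * t.2.2.2 - t.2.2.1 ∧ 3 * (s : ℤ) ≥ t.2.2.2 ∧
        4 * (s : ℤ) ≥ t.1 + 2 * (t.2.2.1 - t.2.1 - t.2.2.2) ∧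
        4 * (s : ℤ) ≥ t.2.2.1 - 2 * t.2.2.2} = ↑(T s) := by
    ext ⟨a, b, c, d⟩
    simp only [Set.mem_setOf_eq, T, Lo, Up, Finset.coe_biUnion, Finset.mem_coe,
      Finset.mem_biUnion, Finset.mem_range, Finset.mem_image, Finset.mem_Icc,
      Set.mem_iUnion, Prod.mk.injEq, exists_prop]
    constructor
    · rintro ⟨h1, h2, h3, h4, h5, h6, h7, h8, h9, h10, h11, h12, h13, h14⟩
      exact ⟨d.toNat, by omega, c, ⟨by omega, by omega⟩, by omega, by omega, rfl, by omega⟩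
    · rintro ⟨x, hx, y, ⟨hy1, hy2⟩, rfl, rfl, rfl, rfl⟩
      refine ⟨by omega, by omega, by omega, by omega, by omega, by omega, by omega,
        by omega, by omega, by omega, by omega, by omega, by omega, by omega⟩
  rw [hset, Set.ncard_coe_finset, card_T]
  have h2 := card_sum s
  have h4 : 2 * ((∑ x ∈ Finset.range (3*s+1), (Finset.Icc (Lo s x) (Up s x)).card : ℕ) : ℝ)
      = 12*(s:ℝ)^2 + 7*(s:ℝ) + 2 - ((s % 2 : ℕ) : ℝ) := by
    exact_mod_cast h2
  rcases Nat.even_or_odd s with hs | hs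
  · rw [hs.neg_one_pow]
    have hm : s % 2 = 0 := Nat.even_iff.mp hs
    rw [hm] at h4
    push_cast at h4 ⊢
    linarith
  · rw [hs.neg_one_pow]
    have hm : s % 2 = 1 := Nat.odd_iff.mp hs
    rw [hm] at h4
    push_cast at h4 ⊢
    linarith
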